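/- There exists a continuous, compactly supported function h : G → ℝ with h ≥ 0 such that for every x ∈ G the sum Σ_{γ ∈ Γ} h(γx) has only finitely many nonzero terms and equals 1. -/

import Mathlib

open MeasureTheory Pointwise

section aux

variable {G : Type*} [Group G] [TopologicalSpace G] [IsTopologicalGroup G]
    [T2Space G]
    (Γ : Subgroup G) [DiscreteTopology Γ]

/-- Finiteness of lattice points in a compact set. -/
lemma aux_finite_inter {K : Set G} (hK : IsCompact K) :
    {γ : Γ | (γ : G) ∈ K}.Finite := by
  have h := Subgroup.tendsto_coe_cofinite_of_discrete (G := G) Γ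
    (isDiscrete_iff_discreteTopology.mpr inferInstance)
  have : Kᶜ ∈ Filter.cocompact G := hK.compl_mem_cocompact
  have h2 := h this
  simp only [Filter.mem_map, Filter.mem_cofinite, Set.preimage_compl, compl_compl] at h2
  exact h2

lemma aux_finite_mul {K : Set G} (hK : IsCompact K) (x : G) :
    {γ : Γ | (γ : G) * x ∈ K}.Finite := by
  have : {γ : Γ | (γ : G) * x ∈ K} = {γ : Γ | (γ : G) ∈ (fun g => g * x⁻¹) '' K} := by
    ext γ
    simp only [Set.mem_setOf_eq, Set.mem_image]
    constructor
    · intro h; exact ⟨(γ : G) * x, h, by group⟩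
    · rintro ⟨g, hg, heq⟩
      have : (γ : G) * x = g := by rw [← heq]; group
      rwa [this]
  rw [this]
  exact aux_finite_inter Γ (hK.image (Homeomorph.mulRight x⁻¹).continuous)

end aux

/-- For a discrete cocompact subgroup `Γ` of `G` there is a continuous,
compactly supported, nonnegative function `h : G → ℝ` such that for every `x ∈ G` the
sum `Σ_{γ ∈ Γ} h (γ x)` has only finitely many nonzero terms and equals `1`. -/
theorem exists_partition_of_unity_for_lattice
    {G : Type*} [Group G] [TopologicalSpace G] [IsTopologicalGroup G]
    [LocallyCompactSpace G] [T2Space G] [SecondCountableTopology G]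
    [MeasurableSpace G] [BorelSpace G] (μ : Measure G)
    [μ.IsHaarMeasure] [μ.IsMulRightInvariant]
    (Γ : Subgroup G) [DiscreteTopology Γ]
    (hcocompact : ∃ C : Set G, IsCompact C ∧ ∀ g : G, ∃ γ ∈ Γ, γ * g ∈ C) :
    ∃ h : G → ℝ, Continuous h ∧ HasCompactSupport h ∧ (∀ x, 0 ≤ h x) ∧
      ∀ x : G, {γ : Γ | h ((γ : G) * x) ≠ 0}.Finite ∧
        ∑' γ : Γ, h ((γ : G) * x) = 1 := by
  obtain ⟨C, hC, hCcov⟩ := hcocompact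
  -- a bump function equal to 1 on C
  obtain ⟨f, hf1, -, hfc, hf01⟩ :=
    exists_continuous_one_zero_of_isCompact hC isClosed_empty (Set.disjoint_empty C)
  -- finiteness of nonzero terms for each x
  have hfin : ∀ x : G, {γ : Γ | f ((γ : G) * x) ≠ 0}.Finite := by
    intro x
    refine (aux_finite_mul Γ hfc x).subset ?_
    intro γ hγ
    exact subset_tsupport f hγ
  have hsummable : ∀ x : G, Summable (fun γ : Γ => f ((γ : G) * x)) := by
    intro x
    exact summable_of_finite_support ((hfin x).subset (by intro γ; exact id))
  -- F, the sum
  set F : G → ℝ := fun x => ∑' γ : Γ, f ((γ : G) * x) with hF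
  -- invariance of F
  have hFinv : ∀ (γ₀ : Γ) (x : G), F ((γ₀ : G) * x) = F x := by
    intro γ₀ x
    show (∑' γ : Γ, f ((γ : G) * ((γ₀ : G) * x))) = ∑' γ : Γ, f ((γ : G) * x)
    rw [← (Equiv.mulRight γ₀).tsum_eq (fun γ : Γ => f ((γ : G) * x))]
    refine tsum_congr fun γ => ?_
    simp [Equiv.coe_mulRight, mul_assoc]
  -- continuity of F
  have hFcont : Continuous F := by
    rw [continuous_iff_continuousAt]
    intro x₀
    obtain ⟨V, hVc, hVmem⟩ := exists_compact_mem_nhds x₀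
    have hSfin : {γ : Γ | ∃ x ∈ V, (γ : G) * x ∈ tsupport f}.Finite := by
      refine (aux_finite_inter Γ (hfc.mul hVc.inv)).subset ?_
      rintro γ ⟨x, hxV, hγx⟩
      show (γ : G) ∈ tsupport ⇑f * V⁻¹
      have : (γ : G) = ((γ : G) * x) * x⁻¹ := by group
      rw [this]
      exact Set.mul_mem_mul hγx (Set.inv_mem_inv.mpr hxV)
    set S := hSfin.toFinset
    have hEq : ∀ x ∈ V, F x = ∑ γ ∈ S, f ((γ : G) * x) := by
      intro x hx
      refine tsum_eq_sum ?_
      intro γ hγ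
      by_contra hne
      exact hγ (Set.Finite.mem_toFinset hSfin |>.mpr ⟨x, hx, subset_tsupport f hne⟩)
    have hcont : Continuous (fun x => ∑ γ ∈ S, f ((γ : G) * x)) := by
      refine continuous_finset_sum S fun γ _ => ?_
      exact f.continuous.comp (continuous_mul_left _)
    refine ContinuousAt.congr (hcont.continuousAt) ?_
    filter_upwards [hVmem] with x hx
    exact (hEq x hx).symm
  -- positivity of F
  have hfnn : ∀ y, 0 ≤ f y := fun y => (hf01 y).1
  have hFpos : ∀ x, 0 < F x := by
    intro x
    obtain ⟨γ, hγΓ, hγx⟩ := hCcov x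
    calc (0 : ℝ) < 1 := one_pos
    _ = f ((⟨γ, hγΓ⟩ : Γ) * x) := (hf1 hγx).symm
    _ ≤ F x := Summable.le_tsum (hsummable x) ⟨γ, hγΓ⟩ fun γ' _ => hfnn _
  -- define h
  refine ⟨fun x => f x / F x, f.continuous.div hFcont fun x => (hFpos x).ne', ?_, ?_, ?_⟩
  · refine hfc.mono' ?_
    intro x hx
    have : f x ≠ 0 := by
      intro h0
      simp [Function.mem_support, h0] at hx
    exact subset_tsupport f this
  · intro x
    exact div_nonneg (hfnn x) (hFpos x).le
  · intro x
    constructor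
    · refine (hfin x).subset ?_
      intro γ hγ
      simp only [Set.mem_setOf_eq, div_ne_zero_iff] at hγ ⊢
      exact hγ.1
    · have : ∀ γ : Γ, f ((γ : G) * x) / F ((γ : G) * x) = f ((γ : G) * x) / F x := by
        intro γ; rw [hFinv γ x]
      rw [tsum_congr this, tsum_div_const]
      exact div_self (hFpos x).ne'
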